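/- Fix η > 0, T ∈ ℕ, and a matrix A ∈ ℝ^{n×m} all of whose entries lie in [−1, 1] (zero-sum game, learner matrix −A). Then the optimal discrete-time reward against an MWU learner with step η exceeds the optimal continuous-time reward against the Replicator Dynamics with parameter η by at most η·T/2: R*_disc(0, T) − R*_cont(0, T) ≤ η·T/2. -/

import Mathlib

open MeasureTheory

/-- Componentwise cumulative play of a continuous-time strategy: `∫_0^t x(s) ds`. -/
noncomputable def cumX {n : ℕ} (x : ℝ → Fin n → ℝ) (t : ℝ) (k : Fin n) : ℝ :=
  ∫ s in (0:ℝ)..t, x s k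

/-- The Replicator Dynamics learner's mixed strategy at time `t`. -/
noncomputable def contPlay {n m : ℕ} (η : ℝ) (A : Matrix (Fin n) (Fin m) ℝ)
    (h0 : Fin m → ℝ) (x : ℝ → Fin n → ℝ) (t : ℝ) (i : Fin m) : ℝ :=
  Real.exp (η * (h0 i - ∑ k, cumX x t k * A k i)) /
    ∑ j, Real.exp (η * (h0 j - ∑ k, cumX x t k * A k j))

/-- The optimizer's continuous-time reward against the Replicator Dynamics. -/
noncomputable def Rcont {n m : ℕ} (η : ℝ) (A : Matrix (Fin n) (Fin m) ℝ)
    (h0 : Fin m → ℝ) (T : ℝ) (x : ℝ → Fin n → ℝ) : ℝ :=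
  ∫ t in (0:ℝ)..T, ∑ k, ∑ i, x t k * A k i * contPlay η A h0 x t i

/-- The optimal continuous-time reward. -/
noncomputable def RcontStar {n m : ℕ} (η : ℝ) (A : Matrix (Fin n) (Fin m) ℝ)
    (h0 : Fin m → ℝ) (T : ℝ) : ℝ :=
  sSup {r | ∃ x : ℝ → Fin n → ℝ, Measurable x ∧
    (∀ t ∈ Set.Icc (0:ℝ) T, x t ∈ stdSimplex ℝ (Fin n)) ∧ r = Rcont η A h0 T x}

/-- The MWU learner's mixed strategy at round `t` (learner matrix `−A`). -/
noncomputable def discPlay {n m : ℕ} (η : ℝ) (A : Matrix (Fin n) (Fin m) ℝ)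
    (h0 : Fin m → ℝ) (x : ℕ → Fin n → ℝ) (t : ℕ) (i : Fin m) : ℝ :=
  Real.exp (η * (h0 i - ∑ s ∈ Finset.range t, ∑ k, x s k * A k i)) /
    ∑ j, Real.exp (η * (h0 j - ∑ s ∈ Finset.range t, ∑ k, x s k * A k j))

/-- The optimizer's discrete-time reward over `T` rounds against the MWU learner. -/
noncomputable def Rdisc {n m : ℕ} (η : ℝ) (A : Matrix (Fin n) (Fin m) ℝ)
    (h0 : Fin m → ℝ) (T : ℕ) (x : ℕ → Fin n → ℝ) : ℝ :=
  ∑ t ∈ Finset.range T, ∑ k, ∑ i, x t k * A k i * discPlay η A h0 x t i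

/-- The optimal discrete-time reward. -/
noncomputable def RdiscStar {n m : ℕ} (η : ℝ) (A : Matrix (Fin n) (Fin m) ℝ)
    (h0 : Fin m → ℝ) (T : ℕ) : ℝ :=
  sSup {r | ∃ x : ℕ → Fin n → ℝ, (∀ t, x t ∈ stdSimplex ℝ (Fin n)) ∧
    r = Rdisc η A h0 T x}



noncomputable def gfun (η : ℝ) {m : ℕ} (a v : Fin m → ℝ) (t : ℝ) : ℝ :=
  (∑ i, v i * Real.exp (a i - η * t * v i)) / (∑ i, Real.exp (a i - η * t * v i))

lemma gDenom_pos (η : ℝ) {m : ℕ} (hm : 0 < m) (a v : Fin m → ℝ) (t : ℝ) :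
    0 < ∑ i, Real.exp (a i - η * t * v i) := by
  haveI : NeZero m := ⟨hm.ne'⟩
  exact Finset.sum_pos (fun i _ => Real.exp_pos _) ⟨⟨0, hm⟩, Finset.mem_univ _⟩

lemma gfun_hasDerivAt (η : ℝ) {m : ℕ} (hm : 0 < m) (a v : Fin m → ℝ) (t : ℝ) :
    HasDerivAt (gfun η a v)
      ((((∑ i, v i * (Real.exp (a i - η * t * v i) * -(η * v i)))) * (∑ i, Real.exp (a i - η * t * v i))
        - (∑ i, v i * Real.exp (a i - η * t * v i)) * (∑ i, Real.exp (a i - η * t * v i) * -(η * v i)))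
        / (∑ i, Real.exp (a i - η * t * v i))^2) t := by
  have hexp : ∀ i : Fin m, HasDerivAt (fun t => Real.exp (a i - η * t * v i))
      (Real.exp (a i - η * t * v i) * -(η * v i)) t := by
    intro i
    have h1 : HasDerivAt (fun t : ℝ => a i - η * t * v i) (-(η * v i)) t := by
      simpa using ((hasDerivAt_id t).const_mul η |>.mul_const (v i)).const_sub (a i)
    exact (Real.hasDerivAt_exp _).comp t h1
  have hN : HasDerivAt (fun t => ∑ i, v i * Real.exp (a i - η * t * v i))
      (∑ i, v i * (Real.exp (a i - η * t * v i) * -(η * v i))) t :=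
    HasDerivAt.fun_sum (fun i _ => (hexp i).const_mul (v i))
  have hD : HasDerivAt (fun t => ∑ i, Real.exp (a i - η * t * v i))
      (∑ i, Real.exp (a i - η * t * v i) * -(η * v i)) t :=
    HasDerivAt.fun_sum (fun i _ => hexp i)
  exact hN.div hD (gDenom_pos η hm a v t).ne'

lemma gfun_slope (η : ℝ) (hη : 0 < η) {m : ℕ} (hm : 0 < m) (a v : Fin m → ℝ)
    (hv : ∀ i, |v i| ≤ 1) {s t : ℝ} (hst : s ≤ t) :
    gfun η a v s - gfun η a v t ≤ η * (t - s) := by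
  have key : Monotone (fun t => gfun η a v t + η * t) := by
    have hd : ∀ u : ℝ, HasDerivAt (fun t => gfun η a v t + η * t)
        ((((∑ i, v i * (Real.exp (a i - η * u * v i) * -(η * v i)))) * (∑ i, Real.exp (a i - η * u * v i))
        - (∑ i, v i * Real.exp (a i - η * u * v i)) * (∑ i, Real.exp (a i - η * u * v i) * -(η * v i)))
        / (∑ i, Real.exp (a i - η * u * v i))^2 + η) u := by
      intro u
      simpa using (gfun_hasDerivAt η hm a v u).fun_add ((hasDerivAt_id u).const_mul η)
    apply monotone_of_deriv_nonneg
    · exact fun u => ((hd u).differentiableAt)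
    · intro u
      rw [(hd u).deriv]
      set e : Fin m → ℝ := fun i => Real.exp (a i - η * u * v i) with he
      have hepos : ∀ i, 0 < e i := fun i => Real.exp_pos _
      set D : ℝ := ∑ i, e i with hD
      have hDpos : 0 < D := gDenom_pos η hm a v u
      set N : ℝ := ∑ i, v i * e i with hN
      set Q : ℝ := ∑ i, v i * (v i * e i) with hQ
      have h1 : (∑ i, v i * (e i * -(η * v i))) = -η * Q := by
        rw [hQ, Finset.mul_sum]; congr 1; ext i; ring
      have h2 : (∑ i, e i * -(η * v i)) = -η * N := by
        rw [hN, Finset.mul_sum]; congr 1; ext i; ring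
      rw [h1, h2]
      have hQD : Q ≤ D := by
        apply Finset.sum_le_sum
        intro i _
        have : v i * v i ≤ 1 := by nlinarith [hv i, abs_nonneg (v i), neg_abs_le (v i), le_abs_self (v i)]
        nlinarith [(hepos i).le]
      have hQnn : 0 ≤ Q := Finset.sum_nonneg fun i _ => by nlinarith [(hepos i).le, sq_nonneg (v i)]
      have hnum : -η * Q * D - N * (-η * N) + η * D^2 ≥ 0 := by nlinarith [mul_nonneg (mul_nonneg hη.le hDpos.le) (sub_nonneg.2 hQD), mul_nonneg hη.le (sq_nonneg N)]
      have : (-η * Q * D - N * (-η * N)) / D^2 + η = (-η * Q * D - N * (-η * N) + η * D^2) / D^2 := by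
        field_simp
      rw [this]
      positivity
  have := key hst
  simp only at this
  linarith

lemma gfun_continuous (η : ℝ) {m : ℕ} (hm : 0 < m) (a v : Fin m → ℝ) :
    Continuous (gfun η a v) :=
  continuous_iff_continuousAt.2 fun t => (gfun_hasDerivAt η hm a v t).continuousAt

lemma gfun_round (η : ℝ) (hη : 0 < η) {m : ℕ} (hm : 0 < m) (a v : Fin m → ℝ)
    (hv : ∀ i, |v i| ≤ 1) (s : ℝ) :
    gfun η a v s ≤ (∫ t in s..(s+1), gfun η a v t) + η / 2 := by
  have hint : IntervalIntegrable (gfun η a v) volume s (s+1) :=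
    (gfun_continuous η hm a v).intervalIntegrable _ _
  have hle : ∀ t ∈ Set.Icc s (s+1), gfun η a v s - η * (t - s) ≤ gfun η a v t := by
    intro t ht
    have := gfun_slope η hη hm a v hv ht.1
    linarith
  have hmono : (∫ t in s..(s+1), (gfun η a v s - η * (t - s)))
      ≤ ∫ t in s..(s+1), gfun η a v t := by
    apply intervalIntegral.integral_mono_on (by linarith)
    · exact (intervalIntegrable_const.sub ((continuous_const.mul (continuous_id.sub continuous_const) : Continuous fun t : ℝ => η * (t - s)).intervalIntegrable _ _))
    · exact hint
    · exact hle
  have hcalc : (∫ t in s..(s+1), (gfun η a v s - η * (t - s))) = gfun η a v s - η / 2 := by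
    rw [intervalIntegral.integral_sub (g := fun t : ℝ => η * (t - s)) intervalIntegrable_const
        ((continuous_const.mul (continuous_id.sub continuous_const) : Continuous fun t : ℝ => η * (t - s)).intervalIntegrable _ _)]
    rw [intervalIntegral.integral_const]
    have : (∫ t in s..(s+1), η * (t - s)) = η * ∫ t in s..(s+1), (t - s) := by
      rw [← intervalIntegral.integral_const_mul]
    rw [this]
    have h2 : (∫ t in s..(s+1), (t - s)) = 1 / 2 := by
      rw [show (fun t : ℝ => t - s) = (fun t : ℝ => id t - s) from rfl, intervalIntegral.integral_sub ((continuous_id).intervalIntegrable _ _) intervalIntegrable_const]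
      simp [integral_id, intervalIntegral.integral_const]
      ring
    rw [h2]; simp; ring
  linarith [hmono, hcalc ▸ hmono]

noncomputable def xt {n : ℕ} (x : ℕ → Fin n → ℝ) : ℝ → Fin n → ℝ := fun t => x ⌊t⌋₊

lemma xt_measurable {n : ℕ} (x : ℕ → Fin n → ℝ) : Measurable (xt x) :=
  measurable_from_top.comp Nat.measurable_floor

lemma simplex_coord_mem {n : ℕ} {p : Fin n → ℝ} (hp : p ∈ stdSimplex ℝ (Fin n)) (k : Fin n) :
    p k ∈ Set.Icc (0:ℝ) 1 := by
  refine ⟨hp.1 k, ?_⟩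
  calc p k ≤ ∑ j, p j := Finset.single_le_sum (fun j _ => hp.1 j) (Finset.mem_univ k)
  _ = 1 := hp.2

lemma xtk_intervalIntegrable {n : ℕ} {x : ℕ → Fin n → ℝ}
    (hx : ∀ t, x t ∈ stdSimplex ℝ (Fin n)) (k : Fin n) (a b : ℝ) :
    IntervalIntegrable (fun u => xt x u k) volume a b := by
  refine (intervalIntegrable_const (c := (1:ℝ))).mono_fun ?_ ?_
  · exact ((measurable_from_top (f := fun s : ℕ => x s k)).comp Nat.measurable_floor).aestronglyMeasurable
  · refine Filter.Eventually.of_forall fun u => ?_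
    have := simplex_coord_mem (hx ⌊u⌋₊) k
    simp only [Real.norm_eq_abs, xt]
    rw [abs_of_nonneg this.1, abs_one]
    exact this.2

lemma ae_ne_restrict {c : ℝ} (s : Set ℝ) : ∀ᵐ u ∂(volume.restrict s), u ≠ c := by
  refine ae_restrict_of_ae ?_
  rw [MeasureTheory.ae_iff]
  simpa using measure_singleton c

lemma unit_integral {n : ℕ} (x : ℕ → Fin n → ℝ) (s : ℕ) {t : ℝ}
    (ht1 : (s:ℝ) ≤ t) (ht2 : t ≤ (s:ℝ)+1) (k : Fin n) :
    ∫ u in (s:ℝ)..t, xt x u k = (t - s) * x s k := by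
  have hne : ∀ᵐ u ∂(volume : Measure ℝ), u ≠ (s:ℝ)+1 := by
    rw [MeasureTheory.ae_iff]; simpa using measure_singleton ((s:ℝ)+1)
  have hcongr : ∀ᵐ u ∂(volume : Measure ℝ), u ∈ Set.uIoc (s:ℝ) t →
      xt x u k = x s k := by
    filter_upwards [hne] with u hne hu
    have hu' : u ∈ Set.Ioc (s:ℝ) t := by
      rwa [Set.uIoc_of_le ht1] at hu
    have h1 : (s:ℝ) ≤ u := hu'.1.le
    have h2 : u < (s:ℝ)+1 := lt_of_le_of_ne (hu'.2.trans ht2) hne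
    simp only [xt]
    rw [Nat.floor_eq_on_Ico s u ⟨by exact_mod_cast h1, by exact_mod_cast h2⟩]
  rw [intervalIntegral.integral_congr_ae hcongr, intervalIntegral.integral_const, smul_eq_mul]

lemma cumX_formula {n : ℕ} {x : ℕ → Fin n → ℝ} (hx : ∀ t, x t ∈ stdSimplex ℝ (Fin n))
    (s : ℕ) {t : ℝ} (ht1 : (s:ℝ) ≤ t) (ht2 : t ≤ (s:ℝ)+1) (k : Fin n) :
    cumX (xt x) t k = (∑ u ∈ Finset.range s, x u k) + (t - s) * x s k := by
  have hsplit : (∫ u in (0:ℝ)..(s:ℝ), xt x u k) + (∫ u in (s:ℝ)..t, xt x u k)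
      = ∫ u in (0:ℝ)..t, xt x u k :=
    intervalIntegral.integral_add_adjacent_intervals
      (xtk_intervalIntegrable hx k _ _) (xtk_intervalIntegrable hx k _ _)
  have hsum : (∫ u in (0:ℝ)..(s:ℝ), xt x u k) = ∑ u ∈ Finset.range s, x u k := by
    have := intervalIntegral.sum_integral_adjacent_intervals
      (a := fun u : ℕ => (u:ℝ)) (n := s) (f := fun u => xt x u k) (μ := volume)
      (fun u _ => xtk_intervalIntegrable hx k _ _)
    simp only [Nat.cast_zero] at this
    rw [← this]
    apply Finset.sum_congr rfl
    intro u _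
    have h := unit_integral x u (t := (u:ℝ)+1) (by linarith) (le_refl _) k
    push_cast
    rw [h]
    ring
  rw [cumX, ← hsplit, hsum, unit_integral x s ht1 ht2 k]


section Round

variable {n m : ℕ} {η : ℝ} {A : Matrix (Fin n) (Fin m) ℝ} {x : ℕ → Fin n → ℝ}

lemma sum_swap_hist (s : ℕ) (A : Matrix (Fin n) (Fin m) ℝ) (x : ℕ → Fin n → ℝ) (i : Fin m) :
    ∑ u ∈ Finset.range s, ∑ k, x u k * A k i
      = ∑ k, (∑ u ∈ Finset.range s, x u k) * A k i := by
  rw [Finset.sum_comm]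
  exact Finset.sum_congr rfl fun k _ => (Finset.sum_mul _ _ _).symm

/-- abbreviations for round `s` -/
noncomputable def rv (A : Matrix (Fin n) (Fin m) ℝ) (x : ℕ → Fin n → ℝ) (s : ℕ) (i : Fin m) : ℝ :=
  ∑ k, x s k * A k i

noncomputable def ra (η : ℝ) (A : Matrix (Fin n) (Fin m) ℝ) (x : ℕ → Fin n → ℝ) (s : ℕ) (i : Fin m) : ℝ :=
  -(η * ∑ k, (∑ u ∈ Finset.range s, x u k) * A k i) + η * s * rv A x s i

lemma rv_abs_le (hx : ∀ t, x t ∈ stdSimplex ℝ (Fin n))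
    (hA : ∀ k i, A k i ∈ Set.Icc (-1 : ℝ) 1) (s : ℕ) (i : Fin m) : |rv A x s i| ≤ 1 := by
  have h1 : |rv A x s i| ≤ ∑ k, |x s k * A k i| := Finset.abs_sum_le_sum_abs _ _
  have h2 : ∀ k ∈ Finset.univ, |x s k * A k i| ≤ x s k := by
    intro k _
    rw [abs_mul, abs_of_nonneg ((hx s).1 k)]
    have hAk := abs_le.2 ⟨(hA k i).1, (hA k i).2⟩
    nlinarith [(hx s).1 k, abs_nonneg (A k i)]
  calc |rv A x s i| ≤ ∑ k, x s k := h1.trans (Finset.sum_le_sum h2)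
  _ = 1 := (hx s).2

lemma contPlay_round (hx : ∀ t, x t ∈ stdSimplex ℝ (Fin n)) (s : ℕ) {t : ℝ}
    (ht1 : (s:ℝ) ≤ t) (ht2 : t ≤ (s:ℝ)+1) (i : Fin m) :
    contPlay η A (fun _ => 0) (xt x) t i
      = Real.exp (ra η A x s i - η * t * rv A x s i)
        / ∑ j, Real.exp (ra η A x s j - η * t * rv A x s j) := by
  have hexp : ∀ j, η * ((0:ℝ) - ∑ k, cumX (xt x) t k * A k j)
      = ra η A x s j - η * t * rv A x s j := by
    intro j
    have hsum : ∑ k, cumX (xt x) t k * A k j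
        = (∑ k, (∑ u ∈ Finset.range s, x u k) * A k j)
          + (t - s) * ∑ k, x s k * A k j := by
      have h1 : ∀ k ∈ Finset.univ, cumX (xt x) t k * A k j
          = (∑ u ∈ Finset.range s, x u k) * A k j + (t - s) * (x s k * A k j) := by
        intro k _
        rw [cumX_formula hx s ht1 ht2 k]
        ring
      rw [Finset.sum_congr rfl h1, Finset.sum_add_distrib, Finset.mul_sum]
    rw [hsum, ra, rv]
    ring
  simp only [contPlay]
  rw [hexp i]
  congr 1
  exact Finset.sum_congr rfl fun j _ => by rw [hexp j]

lemma integrand_round (hx : ∀ t, x t ∈ stdSimplex ℝ (Fin n)) (s : ℕ) {t : ℝ}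
    (ht1 : (s:ℝ) ≤ t) (ht2 : t ≤ (s:ℝ)+1) :
    ∑ k, ∑ i, x s k * A k i * contPlay η A (fun _ => 0) (xt x) t i
      = gfun η (ra η A x s) (rv A x s) t := by
  rw [Finset.sum_comm]
  have h1 : ∀ i ∈ Finset.univ, ∑ k, x s k * A k i * contPlay η A (fun _ => 0) (xt x) t i
      = rv A x s i * Real.exp (ra η A x s i - η * t * rv A x s i)
        / ∑ j, Real.exp (ra η A x s j - η * t * rv A x s j) := by
    intro i _
    rw [← Finset.sum_mul, contPlay_round hx s ht1 ht2 i, rv]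
    ring
  rw [Finset.sum_congr rfl h1, gfun, ← Finset.sum_div]

lemma disc_term_round (s : ℕ) :
    ∑ k, ∑ i, x s k * A k i * discPlay η A (fun _ => 0) x s i
      = gfun η (ra η A x s) (rv A x s) s := by
  have hexp : ∀ j, η * ((0:ℝ) - ∑ u ∈ Finset.range s, ∑ k, x u k * A k j)
      = ra η A x s j - η * s * rv A x s j := by
    intro j
    rw [sum_swap_hist, ra]
    ring
  have hd : ∀ i, discPlay η A (fun _ => 0) x s i
      = Real.exp (ra η A x s i - η * s * rv A x s i)
        / ∑ j, Real.exp (ra η A x s j - η * s * rv A x s j) := by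
    intro i
    simp only [discPlay]
    rw [hexp i]
    congr 1
    exact Finset.sum_congr rfl fun j _ => by rw [hexp j]
  rw [Finset.sum_comm]
  have h1 : ∀ i ∈ Finset.univ, ∑ k, x s k * A k i * discPlay η A (fun _ => 0) x s i
      = rv A x s i * Real.exp (ra η A x s i - η * s * rv A x s i)
        / ∑ j, Real.exp (ra η A x s j - η * s * rv A x s j) := by
    intro i _
    rw [← Finset.sum_mul, hd i, rv]
    ring
  rw [Finset.sum_congr rfl h1, gfun, ← Finset.sum_div]

end Round

section Main

variable {n m : ℕ} {η : ℝ} {A : Matrix (Fin n) (Fin m) ℝ} {x : ℕ → Fin n → ℝ}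

lemma F_ae (hx : ∀ t, x t ∈ stdSimplex ℝ (Fin n)) (s : ℕ) :
    ∀ᵐ t ∂(volume : Measure ℝ), t ∈ Set.uIoc (s:ℝ) ((s:ℝ)+1) →
      (∑ k, ∑ i, xt x t k * A k i * contPlay η A (fun _ => 0) (xt x) t i)
        = gfun η (ra η A x s) (rv A x s) t := by
  have hne : ∀ᵐ t ∂(volume : Measure ℝ), t ≠ (s:ℝ)+1 := by
    rw [MeasureTheory.ae_iff]; simpa using measure_singleton ((s:ℝ)+1)
  filter_upwards [hne] with t hne ht
  rw [Set.uIoc_of_le (by linarith)] at ht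
  have h2 : t < (s:ℝ)+1 := lt_of_le_of_ne ht.2 hne
  have hfl : xt x t = x s := by
    simp only [xt]
    rw [Nat.floor_eq_on_Ico s t ⟨by exact_mod_cast ht.1.le, by exact_mod_cast h2⟩]
  rw [hfl]
  exact integrand_round hx s ht.1.le ht.2

lemma F_intInt (hm : 0 < m) (hx : ∀ t, x t ∈ stdSimplex ℝ (Fin n)) (s : ℕ) :
    IntervalIntegrable
      (fun t => ∑ k, ∑ i, xt x t k * A k i * contPlay η A (fun _ => 0) (xt x) t i)
      volume (s:ℝ) ((s:ℝ)+1) := by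
  refine ((gfun_continuous η hm (ra η A x s) (rv A x s)).intervalIntegrable _ _).congr_ae ?_
  have := F_ae (η := η) (A := A) hx s
  rw [Filter.EventuallyEq]
  rw [MeasureTheory.ae_restrict_iff' measurableSet_uIoc]
  filter_upwards [this] with t h ht
  exact (h ht).symm

lemma Rcont_xt (hm : 0 < m) (hx : ∀ t, x t ∈ stdSimplex ℝ (Fin n)) (T : ℕ) :
    Rcont η A (fun _ => 0) (T:ℝ) (xt x)
      = ∑ s ∈ Finset.range T, ∫ t in (s:ℝ)..((s:ℝ)+1), gfun η (ra η A x s) (rv A x s) t := by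
  rw [Rcont]
  have := intervalIntegral.sum_integral_adjacent_intervals
    (a := fun u : ℕ => (u:ℝ)) (n := T) (μ := volume)
    (f := fun t => ∑ k, ∑ i, xt x t k * A k i * contPlay η A (fun _ => 0) (xt x) t i)
    (fun s _ => by push_cast; exact F_intInt hm hx s)
  simp only [Nat.cast_zero] at this
  rw [← this]
  apply Finset.sum_congr rfl
  intro s _
  push_cast
  rw [intervalIntegral.integral_congr_ae (F_ae hx s)]

lemma Rdisc_le_Rcont (hm : 0 < m) (hη : 0 < η)
    (hA : ∀ k i, A k i ∈ Set.Icc (-1 : ℝ) 1)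
    (hx : ∀ t, x t ∈ stdSimplex ℝ (Fin n)) (T : ℕ) :
    Rdisc η A (fun _ => 0) T x ≤ Rcont η A (fun _ => 0) (T:ℝ) (xt x) + η * T / 2 := by
  rw [Rcont_xt hm hx T, Rdisc]
  have h1 : ∀ s ∈ Finset.range T,
      (∑ k, ∑ i, x s k * A k i * discPlay η A (fun _ => 0) x s i)
        ≤ (∫ t in (s:ℝ)..((s:ℝ)+1), gfun η (ra η A x s) (rv A x s) t) + η / 2 := by
    intro s _
    rw [disc_term_round]
    exact gfun_round η hη hm _ _ (rv_abs_le hx hA s) (s:ℝ)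
  calc ∑ s ∈ Finset.range T, ∑ k, ∑ i, x s k * A k i * discPlay η A (fun _ => 0) x s i
      ≤ ∑ s ∈ Finset.range T,
        ((∫ t in (s:ℝ)..((s:ℝ)+1), gfun η (ra η A x s) (rv A x s) t) + η / 2) :=
        Finset.sum_le_sum h1
  _ = (∑ s ∈ Finset.range T, ∫ t in (s:ℝ)..((s:ℝ)+1), gfun η (ra η A x s) (rv A x s) t)
        + η * T / 2 := by
      rw [Finset.sum_add_distrib, Finset.sum_const, Finset.card_range]
      ring

end Main

section Final

variable {n m : ℕ} {η : ℝ} {A : Matrix (Fin n) (Fin m) ℝ}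

lemma contPlay_nonneg (η : ℝ) (hm : 0 < m) (x' : ℝ → Fin n → ℝ) (t : ℝ) (i : Fin m) :
    0 ≤ contPlay η A (fun _ => 0) x' t i := by
  haveI : NeZero m := ⟨hm.ne'⟩
  exact div_nonneg (Real.exp_pos _).le
    (Finset.sum_nonneg fun j _ => (Real.exp_pos _).le)

lemma contPlay_sum (η : ℝ) (hm : 0 < m) (x' : ℝ → Fin n → ℝ) (t : ℝ) :
    ∑ i, contPlay η A (fun _ => 0) x' t i = 1 := by
  haveI : NeZero m := ⟨hm.ne'⟩
  have hpos : 0 < ∑ j, Real.exp (η * ((0:ℝ) - ∑ k, cumX x' t k * A k j)) :=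
    Finset.sum_pos (fun j _ => Real.exp_pos _) ⟨⟨0, hm⟩, Finset.mem_univ _⟩
  simp only [contPlay]
  rw [← Finset.sum_div]
  exact div_self hpos.ne'

lemma Rcont_le (hm : 0 < m) (hA : ∀ k i, A k i ∈ Set.Icc (-1 : ℝ) 1) (T : ℕ)
    (x' : ℝ → Fin n → ℝ) (hx' : ∀ t ∈ Set.Icc (0:ℝ) (T:ℝ), x' t ∈ stdSimplex ℝ (Fin n)) :
    Rcont η A (fun _ => 0) (T:ℝ) x' ≤ (T:ℝ) := by
  have hb : ∀ t ∈ Set.uIoc (0:ℝ) (T:ℝ),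
      ‖∑ k, ∑ i, x' t k * A k i * contPlay η A (fun _ => 0) x' t i‖ ≤ 1 := by
    intro t ht
    rw [Set.uIoc_of_le (by positivity)] at ht
    have hxt := hx' t ⟨ht.1.le, ht.2⟩
    rw [Real.norm_eq_abs]
    have h1 : |∑ k, ∑ i, x' t k * A k i * contPlay η A (fun _ => 0) x' t i|
        ≤ ∑ k, ∑ i, x' t k * contPlay η A (fun _ => 0) x' t i := by
      refine (Finset.abs_sum_le_sum_abs _ _).trans (Finset.sum_le_sum fun k _ => ?_)
      refine (Finset.abs_sum_le_sum_abs _ _).trans (Finset.sum_le_sum fun i _ => ?_)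
      have hxk := hxt.1 k
      have hyi := contPlay_nonneg (A := A) η hm x' t i
      have hAk := hA k i
      rw [abs_mul, abs_mul, abs_of_nonneg hxk, abs_of_nonneg hyi]
      have : |A k i| ≤ 1 := abs_le.2 ⟨hAk.1, hAk.2⟩
      nlinarith [abs_nonneg (A k i), mul_nonneg hxk hyi, mul_nonneg (mul_nonneg hxk (abs_nonneg (A k i))) hyi, mul_le_mul_of_nonneg_right (mul_le_mul_of_nonneg_left this hxk) hyi]
    calc |∑ k, ∑ i, x' t k * A k i * contPlay η A (fun _ => 0) x' t i|
        ≤ ∑ k, ∑ i, x' t k * contPlay η A (fun _ => 0) x' t i := h1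
    _ = ∑ k, x' t k * ∑ i, contPlay η A (fun _ => 0) x' t i := by
        exact Finset.sum_congr rfl fun k _ => (Finset.mul_sum _ _ _).symm
    _ = 1 := by rw [contPlay_sum (A := A) η hm x' t]; simp [hxt.2]
  have h := intervalIntegral.norm_integral_le_of_norm_le_const hb
  simp only [Real.norm_eq_abs, sub_zero, mul_one] at h
  rw [abs_of_nonneg (by positivity : (0:ℝ) ≤ (T:ℝ))] at h
  rw [Rcont]
  linarith [(abs_le.1 h).2]
end Final

/-- if all entries of `A` lie in `[−1,1]`, then
`R*_disc(0,T) − R*_cont(0,T) ≤ η·T/2`. -/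
theorem stmt10 {n m : ℕ} (hn : 0 < n) (hm : 0 < m) (η : ℝ) (hη : 0 < η) (T : ℕ)
    (A : Matrix (Fin n) (Fin m) ℝ) (hA : ∀ k i, A k i ∈ Set.Icc (-1 : ℝ) 1) :
    RdiscStar η A (fun _ => 0) T - RcontStar η A (fun _ => 0) (T : ℝ) ≤ η * T / 2 := by
  set Sc : Set ℝ := {r | ∃ x : ℝ → Fin n → ℝ, Measurable x ∧
    (∀ t ∈ Set.Icc (0:ℝ) (T:ℝ), x t ∈ stdSimplex ℝ (Fin n)) ∧
    r = Rcont η A (fun _ => 0) (T:ℝ) x} with hSc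
  have hScBdd : BddAbove Sc := by
    refine ⟨(T:ℝ), fun r hr => ?_⟩
    obtain ⟨x', hmeas, hx', rfl⟩ := hr
    exact Rcont_le hm hA T x' hx'
  have hkey : ∀ r ∈ {r | ∃ x : ℕ → Fin n → ℝ, (∀ t, x t ∈ stdSimplex ℝ (Fin n)) ∧
      r = Rdisc η A (fun _ => 0) T x},
      r ≤ RcontStar η A (fun _ => 0) (T:ℝ) + η * T / 2 := by
    rintro r ⟨x, hx, rfl⟩
    have h1 := Rdisc_le_Rcont (A := A) hm hη hA hx T
    have h2 : Rcont η A (fun _ => 0) (T:ℝ) (xt x) ≤ RcontStar η A (fun _ => 0) (T:ℝ) := by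
      apply le_csSup hScBdd
      exact ⟨xt x, xt_measurable x, fun t _ => hx ⌊t⌋₊, rfl⟩
    linarith
  have hne : ∃ r, r ∈ {r | ∃ x : ℕ → Fin n → ℝ, (∀ t, x t ∈ stdSimplex ℝ (Fin n)) ∧
      r = Rdisc η A (fun _ => 0) T x} := by
    refine ⟨_, fun _ k => (n:ℝ)⁻¹, fun t => ⟨fun k => by positivity, ?_⟩, rfl⟩
    rw [Finset.sum_const, Finset.card_univ, Fintype.card_fin, nsmul_eq_mul]
    field_simp
  have := csSup_le hne hkey
  rw [RdiscStar]
  linarith
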